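/- Let n ≥ 2 and let h : {1,…,n} → {1,…,n} be a Hessenberg function. Then max{ℓ(w) : w ∈ S_n, w⁻¹(1) ≤ h(w⁻¹(n))} = (n−1)(n−2)/2 + max{h(j) − j : 1 ≤ j ≤ n}. -/

import Mathlib

set_option maxHeartbeats 1000000

open Finset

/-- Number of inversions of a permutation of {1,…,n} (encoded on `Fin n`):
`ℓ(w) = |{(a,b) : a < b, w(a) > w(b)}|`. -/
def invCount {n : ℕ} (w : Equiv.Perm (Fin n)) : ℕ :=
  (Finset.univ.filter (fun p : Fin n × Fin n => p.1 < p.2 ∧ w p.2 < w p.1)).card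

private lemma card_filter_prod {n : ℕ} (P : Fin n × Fin n → Prop) [DecidablePred P] :
    (univ.filter P).card = ∑ x : Fin n, (univ.filter fun y => P (x, y)).card := by
  rw [Finset.card_filter, Fintype.sum_prod_type]
  congr 1; ext x
  rw [Finset.card_filter]

private lemma card_filter_prod' {n : ℕ} (P : Fin n × Fin n → Prop) [DecidablePred P] :
    (univ.filter P).card = ∑ y : Fin n, (univ.filter fun x => P (x, y)).card := by
  rw [Finset.card_filter, Fintype.sum_prod_type_right]
  congr 1; ext y
  rw [Finset.card_filter]

private lemma card_lt_fiber {n : ℕ} (y : Fin n) :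
    (univ.filter fun x : Fin n => x < y).card = y.val := by
  have : (univ.filter fun x : Fin n => x < y) = Finset.Iio y := by ext x; simp
  rw [this, Fin.card_Iio]

private lemma card_gt_fiber {n : ℕ} (x : Fin n) :
    (univ.filter fun y : Fin n => x < y).card = n - 1 - x.val := by
  have : (univ.filter fun y : Fin n => x < y) = Finset.Ioi x := by ext z; simp
  rw [this, Fin.card_Ioi]

private lemma cardT {n : ℕ} :
    2 * (univ.filter fun p : Fin n × Fin n => p.1 < p.2).card = n * (n - 1) := by
  rw [card_filter_prod']
  have : ∀ y : Fin n, (univ.filter fun x : Fin n => x < y).card = y.val :=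
    card_lt_fiber
  simp only [this]
  rw [Fin.sum_univ_eq_sum_range (fun i => i) n, Nat.mul_comm, Finset.sum_range_id_mul_two]

private lemma cardA {n : ℕ} (c : Fin n) :
    (univ.filter fun p : Fin n × Fin n => p.1 < p.2 ∧ p.2 = c).card = c.val := by
  rw [card_filter_prod']
  rw [Finset.sum_eq_single c]
  · rw [← card_lt_fiber c]; congr 1; ext x; simp
  · intro y _ hy
    rw [Finset.card_eq_zero]
    ext x; simp; intro _ hc; exact absurd hc hy
  · simp

private lemma cardB {n : ℕ} (c : Fin n) :
    (univ.filter fun p : Fin n × Fin n => p.1 < p.2 ∧ p.1 = c).card = n - 1 - c.val := by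
  rw [card_filter_prod]
  rw [Finset.sum_eq_single c]
  · rw [← card_gt_fiber c]; congr 1; ext y; simp
  · intro x _ hx
    rw [Finset.card_eq_zero]
    ext y; simp; intro _ hc; exact absurd hc hx
  · simp

private lemma cardI {n : ℕ} (c d : Fin n) :
    (univ.filter fun p : Fin n × Fin n => p.1 < p.2 ∧ p.2 = d ∧ p.1 = c).card
      = if c < d then 1 else 0 := by
  split_ifs with hcd
  · rw [Finset.card_eq_one]
    refine ⟨(c, d), ?_⟩
    ext p
    simp only [mem_filter, mem_univ, true_and, mem_singleton, Prod.ext_iff]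
    constructor
    · rintro ⟨_, h2, h1⟩; exact ⟨h1, h2⟩
    · rintro ⟨h1, h2⟩; subst h1; subst h2; exact ⟨hcd, rfl, rfl⟩
  · rw [Finset.card_eq_zero]
    ext p
    simp only [mem_filter, mem_univ, true_and, Finset.notMem_empty, iff_false, not_and]
    rintro hlt rfl rfl; exact hcd hlt

private lemma card_split {n : ℕ} (c d : Fin n) :
    (univ.filter fun p : Fin n × Fin n => p.1 < p.2 ∧ (p.2 = d ∨ p.1 = c)).card
      + (if c < d then 1 else 0) = d.val + (n - 1 - c.val) := by
  have hu : (univ.filter fun p : Fin n × Fin n => p.1 < p.2 ∧ (p.2 = d ∨ p.1 = c))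
      = (univ.filter fun p : Fin n × Fin n => p.1 < p.2 ∧ p.2 = d)
        ∪ (univ.filter fun p : Fin n × Fin n => p.1 < p.2 ∧ p.1 = c) := by
    ext p; simp only [mem_filter, mem_univ, true_and, mem_union]; tauto
  have hi : (univ.filter fun p : Fin n × Fin n => p.1 < p.2 ∧ p.2 = d)
        ∩ (univ.filter fun p : Fin n × Fin n => p.1 < p.2 ∧ p.1 = c)
      = (univ.filter fun p : Fin n × Fin n => p.1 < p.2 ∧ p.2 = d ∧ p.1 = c) := by
    ext p; simp only [mem_inter, mem_filter, mem_univ, true_and]; tauto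
  have := Finset.card_union_add_card_inter
    (univ.filter fun p : Fin n × Fin n => p.1 < p.2 ∧ p.2 = d)
    (univ.filter fun p : Fin n × Fin n => p.1 < p.2 ∧ p.1 = c)
  rw [hi, cardI, cardA, cardB, ← hu] at this
  exact this

/-- `invCount` plus the number of non-inversions is the total number of pairs. -/
private lemma invCount_add_noninv {n : ℕ} (w : Equiv.Perm (Fin n)) :
    invCount w + (univ.filter fun p : Fin n × Fin n => p.1 < p.2 ∧ ¬ w p.2 < w p.1).card
      = (univ.filter fun p : Fin n × Fin n => p.1 < p.2).card := by
  rw [invCount, ← Finset.filter_filter (fun p : Fin n × Fin n => p.1 < p.2)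
      (fun p => w p.2 < w p.1),
    ← Finset.filter_filter (fun p : Fin n × Fin n => p.1 < p.2)
      (fun p => ¬ w p.2 < w p.1)]
  exact Finset.card_filter_add_card_filter_not _

private def lowF {n : ℕ} (a0 b0 : ℕ) (p : Fin n) : Fin n :=
  ⟨if p.val = a0 then n - 1 else if p.val = b0 then 0
    else if p.val < a0 then n - 2 - p.val
    else if p.val < b0 then n - 1 - p.val else n - p.val, by
    have := p.isLt; split_ifs <;> omega⟩

private lemma lowF_inj {n : ℕ} {a0 b0 : ℕ} (hab : a0 < b0) (hb : b0 < n) :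
    Function.Injective (lowF (n := n) a0 b0) := by
  intro p q hpq
  have hp := p.isLt; have hq := q.isLt
  rw [Fin.ext_iff] at hpq ⊢
  simp only [lowF] at hpq
  split_ifs at hpq <;> omega

private lemma lowF_noninv {n : ℕ} {a0 b0 : ℕ} (hab : a0 < b0) (hb : b0 < n)
    (x y : Fin n) (hxy : x < y) :
    ¬ (lowF a0 b0 y < lowF a0 b0 x) ↔ (y.val = a0 ∨ x.val = b0) := by
  have hx := x.isLt; have hy := y.isLt
  rw [Fin.lt_def] at hxy
  rw [Fin.lt_def]
  simp only [lowF]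
  split_ifs <;> simp <;> omega

private def lowG {n : ℕ} (p : Fin n) : Fin n :=
  ⟨if p.val = 0 then 0 else n - p.val, by have := p.isLt; split_ifs <;> omega⟩

private lemma lowG_inj {n : ℕ} : Function.Injective (lowG (n := n)) := by
  intro p q hpq
  have hp := p.isLt; have hq := q.isLt
  rw [Fin.ext_iff] at hpq ⊢
  simp only [lowG] at hpq
  split_ifs at hpq <;> omega

private lemma lowG_noninv {n : ℕ} (x y : Fin n) (hxy : x < y) :
    ¬ (lowG y < lowG x) ↔ x.val = 0 := by
  have hx := x.isLt; have hy := y.isLt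
  rw [Fin.lt_def] at hxy
  rw [Fin.lt_def]
  simp only [lowG]
  split_ifs <;> simp <;> omega

/-- For n ≥ 2 and a Hessenberg function h,
max{ℓ(w) : w ∈ S_n, w⁻¹(1) ≤ h(w⁻¹(n))} = (n−1)(n−2)/2 + max{h(j) − j : 1 ≤ j ≤ n}.
Both maxima are over nonempty sets and are expressed with `Finset.sup` (into ℕ).
Permutations are encoded on `Fin n`, position j ∈ {1,…,n} corresponding to `⟨j-1,_⟩`. -/
theorem stmt_4 (n : ℕ) (hn : 2 ≤ n) (h : ℕ → ℕ)
    (hmono : ∀ i j, 1 ≤ i → i ≤ j → j ≤ n → h i ≤ h j)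
    (hdom : ∀ j, 1 ≤ j → j ≤ n → j ≤ h j ∧ h j ≤ n) :
    (Finset.univ.filter (fun w : Equiv.Perm (Fin n) =>
        ((w⁻¹ ⟨0, by omega⟩ : Fin n) : ℕ) + 1 ≤
          h (((w⁻¹ ⟨n - 1, by omega⟩ : Fin n) : ℕ) + 1))).sup (fun w => invCount w) =
      (n - 1) * (n - 2) / 2 + (Finset.Icc 1 n).sup (fun j => h j - j) := by
  obtain ⟨m, rfl⟩ : ∃ m, n = m + 2 := ⟨n - 2, by omega⟩
  set M := (Finset.Icc 1 (m + 2)).sup (fun j => h j - j) with hMdef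
  -- arithmetic facts
  have hT : 2 * (univ.filter fun p : Fin (m + 2) × Fin (m + 2) => p.1 < p.2).card
      = (m + 2) * (m + 1) := by
    have := cardT (n := m + 2); simpa using this
  have e1 : (m + 2 - 1) * (m + 2 - 2) / 2 = (m + 1) * m / 2 := by norm_num
  have e2 : 2 * ((m + 1) * m / 2) = (m + 1) * m := by
    refine Nat.mul_div_cancel' ?_ ;
    have := Nat.even_mul_succ_self m
    rcases this with ⟨k, hk⟩
    exact ⟨k, by linarith [hk]⟩
  have e3 : (m + 2) * (m + 1) = (m + 1) * m + 2 * (m + 1) := by ring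
  have P0 : 0 < m + 2 := Nat.succ_pos _
  have P1 : 1 < m + 2 := Nat.succ_lt_succ (Nat.succ_pos _)
  have PL : m + 2 - 1 < m + 2 := Nat.lt_succ_self _
  apply le_antisymm
  · -- upper bound
    apply Finset.sup_le
    intro w hw
    rw [Finset.mem_filter] at hw
    have hcond := hw.2
    set p1 : Fin (m + 2) := w⁻¹ ⟨0, P0⟩ with hp1
    set pn : Fin (m + 2) := w⁻¹ ⟨m + 2 - 1, PL⟩ with hpn
    have hwpn : w pn = ⟨m + 2 - 1, PL⟩ := by
      rw [hpn]; exact w.apply_symm_apply _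
    have hwp1 : w p1 = ⟨0, P0⟩ := by
      rw [hp1]; exact w.apply_symm_apply _
    have hsub : (univ.filter fun p : Fin (m + 2) × Fin (m + 2) =>
          p.1 < p.2 ∧ (p.2 = pn ∨ p.1 = p1))
        ⊆ (univ.filter fun p : Fin (m + 2) × Fin (m + 2) =>
          p.1 < p.2 ∧ ¬ w p.2 < w p.1) := by
      intro p hp
      simp only [Finset.mem_filter, Finset.mem_univ, true_and] at hp ⊢
      refine ⟨hp.1, ?_⟩
      rcases hp.2 with h2 | h2
      · rw [h2, hwpn, Fin.lt_def]
        have := (w p.1).isLt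
        simp only [not_lt]
        omega
      · rw [h2, hwp1, Fin.lt_def]
        simp
    have hinv := invCount_add_noninv w
    have hcard := Finset.card_le_card hsub
    have hsplit := card_split p1 pn
    have hne : p1.val ≠ pn.val := by
      intro e
      have h0 : w p1 = w pn := congrArg w (Fin.ext e)
      rw [hwp1, hwpn, Fin.ext_iff] at h0
      simp at h0
    have hMle : h (pn.val + 1) - (pn.val + 1) ≤ M := by
      apply Finset.le_sup (f := fun j => h j - j)
      rw [Finset.mem_Icc]
      have := pn.isLt
      omega
    have hcond' : p1.val + 1 ≤ h (pn.val + 1) := hcond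
    have hplt := p1.isLt
    have hpnlt := pn.isLt
    by_cases hpp : p1 < pn
    · rw [if_pos hpp] at hsplit
      rw [Fin.lt_def] at hpp
      omega
    · rw [if_neg hpp] at hsplit
      rw [Fin.lt_def, not_lt] at hpp
      omega
  · -- lower bound
    have hne : (Finset.Icc 1 (m + 2)).Nonempty := ⟨1, by rw [Finset.mem_Icc]; omega⟩
    obtain ⟨j0, hj0mem, hj0⟩ :=
      Finset.exists_mem_eq_sup (Finset.Icc 1 (m + 2)) hne (fun j => h j - j)
    rw [Finset.mem_Icc] at hj0mem
    obtain ⟨hdl, hdu⟩ := hdom j0 hj0mem.1 hj0mem.2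
    rw [← hMdef] at hj0
    by_cases hM : M = 0
    · -- use lowG
      set w : Equiv.Perm (Fin (m + 2)) :=
        Equiv.ofBijective lowG (Finite.injective_iff_bijective.mp lowG_inj) with hwdef
      have hwap : ∀ x, w x = lowG x := fun x => rfl
      have hw0 : w ⟨0, P0⟩ = ⟨0, P0⟩ := by
        apply Fin.ext; rw [hwap]; simp [lowG]
      have hw1 : w ⟨1, P1⟩ = ⟨m + 2 - 1, PL⟩ := by
        apply Fin.ext; rw [hwap]; simp [lowG]
      have hwinv0 : w⁻¹ ⟨0, P0⟩ = ⟨0, P0⟩ := by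
        rw [← hw0]; exact w.symm_apply_apply _
      have hwinv1 : w⁻¹ ⟨m + 2 - 1, PL⟩ = ⟨1, P1⟩ := by
        rw [← hw1]; exact w.symm_apply_apply _
      have hmem : w ∈ (Finset.univ.filter (fun w : Equiv.Perm (Fin (m + 2)) =>
          ((w⁻¹ ⟨0, P0⟩ : Fin (m + 2)) : ℕ) + 1 ≤
            h (((w⁻¹ ⟨m + 2 - 1, PL⟩ : Fin (m + 2)) : ℕ) + 1))) := by
        rw [Finset.mem_filter]
        refine ⟨Finset.mem_univ _, ?_⟩
        rw [hwinv0, hwinv1]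
        simp only [Fin.val_mk]
        exact le_trans (by norm_num) (hdom 2 (by norm_num) P1).1
      refine le_trans ?_ (Finset.le_sup hmem)
      -- compute invCount w
      have hchar : (univ.filter fun p : Fin (m + 2) × Fin (m + 2) =>
            p.1 < p.2 ∧ ¬ w p.2 < w p.1)
          = (univ.filter fun p : Fin (m + 2) × Fin (m + 2) =>
            p.1 < p.2 ∧ p.1 = (⟨0, P0⟩ : Fin (m + 2))) := by
        ext p
        simp only [mem_filter, mem_univ, true_and]
        refine and_congr_right fun hlt => ?_
        rw [hwap, hwap, lowG_noninv _ _ hlt]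
        exact (Fin.ext_iff (a := p.1) (b := ⟨0, P0⟩)).symm
      have hinv := invCount_add_noninv w
      rw [hchar, cardB] at hinv
      simp only [Fin.val_mk] at hinv
      omega
    · -- use lowF
      have hMpos : 0 < h j0 - j0 := by omega
      set a0 : ℕ := j0 - 1 with ha0
      set b0 : ℕ := h j0 - 1 with hb0
      have hab : a0 < b0 := by omega
      have hblt : b0 < m + 2 := by omega
      set w : Equiv.Perm (Fin (m + 2)) :=
        Equiv.ofBijective (lowF a0 b0)
          (Finite.injective_iff_bijective.mp (lowF_inj hab hblt)) with hwdef
      have hwap : ∀ x, w x = lowF a0 b0 x := fun x => rfl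
      have Pa : a0 < m + 2 := by omega
      have Pb : b0 < m + 2 := hblt
      have hwb : w ⟨b0, Pb⟩ = ⟨0, P0⟩ := by
        apply Fin.ext; rw [hwap]
        simp only [lowF, Fin.val_mk]
        rw [if_neg (by omega)]
        simp
      have hwa : w ⟨a0, Pa⟩ = ⟨m + 2 - 1, PL⟩ := by
        apply Fin.ext; rw [hwap]
        simp only [lowF, Fin.val_mk]
        simp
      have hwinv0 : w⁻¹ ⟨0, P0⟩ = ⟨b0, Pb⟩ := by
        rw [← hwb]; exact w.symm_apply_apply _
      have hwinv1 : w⁻¹ ⟨m + 2 - 1, PL⟩ = ⟨a0, Pa⟩ := by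
        rw [← hwa]; exact w.symm_apply_apply _
      have hmem : w ∈ (Finset.univ.filter (fun w : Equiv.Perm (Fin (m + 2)) =>
          ((w⁻¹ ⟨0, P0⟩ : Fin (m + 2)) : ℕ) + 1 ≤
            h (((w⁻¹ ⟨m + 2 - 1, PL⟩ : Fin (m + 2)) : ℕ) + 1))) := by
        rw [Finset.mem_filter]
        refine ⟨Finset.mem_univ _, ?_⟩
        rw [hwinv0, hwinv1]
        simp only [Fin.val_mk]
        have : a0 + 1 = j0 := by omega
        rw [this]
        omega
      refine le_trans ?_ (Finset.le_sup hmem)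
      have hchar : (univ.filter fun p : Fin (m + 2) × Fin (m + 2) =>
            p.1 < p.2 ∧ ¬ w p.2 < w p.1)
          = (univ.filter fun p : Fin (m + 2) × Fin (m + 2) =>
            p.1 < p.2 ∧ (p.2 = (⟨a0, Pa⟩ : Fin (m + 2)) ∨
              p.1 = (⟨b0, Pb⟩ : Fin (m + 2)))) := by
        ext p
        simp only [mem_filter, mem_univ, true_and]
        refine and_congr_right fun hlt => ?_
        rw [hwap, hwap, lowF_noninv hab hblt _ _ hlt]
        simp [Fin.ext_iff]
      have hinv := invCount_add_noninv w
      rw [hchar] at hinv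
      have hsplit := card_split (⟨b0, Pb⟩ : Fin (m + 2)) (⟨a0, Pa⟩ : Fin (m + 2))
      rw [if_neg (by rw [Fin.lt_def]; simp; omega)] at hsplit
      simp only [Fin.val_mk] at hsplit
      omega
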